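/- Every point z of the ideal triangle with vertices 0, 1, ∞ in the upper half-plane satisfies at least one of: Im(z) ≥ √3/2, or Im(−1/z) ≥ √3/2, or Im(1/(1 − z)) ≥ √3/2. In other words, the three horoball neighborhoods of the vertices with boundary horocycle through the center (1 + √3 i)/2 cover the ideal triangle. -/

import Mathlib

lemma key_ineq (x y : ℝ) (hx0 : 0 ≤ x) (hx : x ≤ 1/2) (hy : 0 < y)
    (hy2 : y < Real.sqrt 3 / 2) (hc : x - x^2 ≤ y^2) :
    Real.sqrt 3 * (x^2 + y^2) ≤ 2 * y := by
  have hs : Real.sqrt 3 ^ 2 = 3 := Real.sq_sqrt (by norm_num)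
  have hs0 : 0 < Real.sqrt 3 := Real.sqrt_pos.2 (by norm_num)
  set u := Real.sqrt (x - x^2) with hu
  have hxx : 0 ≤ x - x^2 := by nlinarith
  have hu2 : u^2 = x - x^2 := Real.sq_sqrt hxx
  have hu0 : 0 ≤ u := Real.sqrt_nonneg _
  have huy : u ≤ y := by nlinarith
  have hfu : Real.sqrt 3 * x - 2*u ≤ 0 := by nlinarith [sq_nonneg (2*u - Real.sqrt 3 * x)]
  have hfb : Real.sqrt 3 * (x^2 - 1/4) ≤ 0 := by nlinarith
  have hub : u ≤ Real.sqrt 3 / 2 := le_trans huy hy2.le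
  nlinarith [mul_nonneg (neg_nonneg.2 hfu) (sub_nonneg.2 hy2.le),
    mul_nonneg (neg_nonneg.2 hfb) (sub_nonneg.2 huy),
    mul_nonneg (mul_nonneg (sub_nonneg.2 hy2.le) (sub_nonneg.2 huy)) (sub_nonneg.2 hub),
    mul_nonneg (sub_nonneg.2 hy2.le) (sub_nonneg.2 huy), hs, hs0.le]

/-- Every point of the ideal triangle with vertices `0, 1, ∞` in the upper
half-plane lies in one of the three horoball neighborhoods of the vertices
bounded by the horocycles through the center `(1 + √3 i)/2`:
`Im z ≥ √3/2`, or `Im (-1/z) ≥ √3/2`, or `Im (1/(1-z)) ≥ √3/2`. -/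
theorem idealTriangle_covered_by_horoballs (z : ℂ)
    (him : 0 < z.im) (h0 : 0 ≤ z.re) (h1 : z.re ≤ 1)
    (hcirc : 1 / 2 ≤ ‖z - 1 / 2‖) :
    Real.sqrt 3 / 2 ≤ z.im ∨
      Real.sqrt 3 / 2 ≤ (-(1 / z)).im ∨
      Real.sqrt 3 / 2 ≤ (1 / (1 - z)).im := by
  by_cases hy : Real.sqrt 3 / 2 ≤ z.im
  · exact Or.inl hy
  push_neg at hy
  have hcirc2 : (1/2:ℝ)^2 ≤ Complex.normSq (z - 1/2) := by
    rw [← Complex.sq_norm]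
    exact pow_le_pow_left₀ (by norm_num) hcirc 2
  have hns : Complex.normSq (z - 1/2) = (z.re - 1/2)^2 + z.im^2 := by
    rw [Complex.normSq_apply]
    simp [Complex.sub_re, Complex.sub_im]
    ring
  have hc : (1/4:ℝ) ≤ (z.re - 1/2)^2 + z.im^2 := by rw [hns] at hcirc2; linarith [hcirc2]
  rcases le_or_gt z.re (1/2) with hxle | hxgt
  · -- horoball at 0
    right; left
    have hz : z ≠ 0 := fun h => by simp [h] at him
    have hN : 0 < Complex.normSq z := Complex.normSq_pos.2 hz
    have him' : (-(1 / z)).im = z.im / Complex.normSq z := by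
      rw [one_div, Complex.neg_im, Complex.inv_im, neg_div, neg_neg]
    rw [him', div_le_div_iff₀ (by norm_num) hN]
    have hNeq : Complex.normSq z = z.re^2 + z.im^2 := by
      rw [Complex.normSq_apply]; ring
    rw [hNeq]
    have := key_ineq z.re z.im h0 hxle him hy (by nlinarith)
    linarith
  · -- horoball at 1
    right; right
    have hz : (1 : ℂ) - z ≠ 0 := by
      intro h
      have h2 : (1 - z).im = 0 := by rw [h]; simp
      rw [Complex.sub_im, Complex.one_im] at h2
      linarith
    have hN : 0 < Complex.normSq (1 - z) := Complex.normSq_pos.2 hz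
    have him' : (1 / (1 - z)).im = z.im / Complex.normSq (1 - z) := by
      rw [one_div, Complex.inv_im, Complex.sub_im, Complex.one_im]
      ring
    rw [him', div_le_div_iff₀ (by norm_num) hN]
    have hNeq : Complex.normSq (1 - z) = (1 - z.re)^2 + z.im^2 := by
      rw [Complex.normSq_apply]
      simp [Complex.sub_re, Complex.sub_im]
      ring
    rw [hNeq]
    have := key_ineq (1 - z.re) z.im (by linarith) (by linarith) him hy (by nlinarith)
    linarith
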